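/- For every 3-partite 3-uniform hypergraph H with R'_2(H) ≥ t(H) + 1, the 3-partite constrained Ramsey number satisfies f'(H, ℒ) = R'_2(H), where t(H) is the minimum integer t such that H is a subgraph of K^{(3)}_{t,t,t}. -/

import Mathlib

/-- An edge of the complete 3-partite 3-graph `K^{(3)}_{n,n,n}` (with partite sets
`V_ℓ = {ℓ} × Fin n` for `ℓ : Fin 3`): a 3-set with exactly one vertex in each partite set. -/
def IsTriEdge {n : ℕ} (e : Finset (Fin 3 × Fin n)) : Prop :=
  e.card = 3 ∧ e.image Prod.fst = Finset.univ

/-- A 3-partite 3-uniform hypergraph, with partite sets `{ℓ} × Fin m` for `ℓ : Fin 3`. -/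
structure TriGraph where
  m : ℕ
  edges : Finset (Finset (Fin 3 × Fin m))
  isTri : ∀ e ∈ edges, IsTriEdge e

/-- `H` is (isomorphic to) a subgraph of `K^{(3)}_{N,N,N}`. -/
def TriGraph.HasCopy (H : TriGraph) (N : ℕ) : Prop :=
  ∃ f : Fin 3 × Fin H.m → Fin 3 × Fin N, Function.Injective f ∧
    ∀ e ∈ H.edges, IsTriEdge (e.image f)

/-- `t(H)`: the minimum `t` such that `H ⊆ K^{(3)}_{t,t,t}`. -/
noncomputable def tOf (H : TriGraph) : ℕ := sInf {t : ℕ | H.HasCopy t}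

/-- The edge-coloring `c` of `K^{(3)}_{N,N,N}` contains a monochromatic copy of `H`. -/
def TriGraph.HasMonoCopy {N : ℕ} {α : Type*} (H : TriGraph)
    (c : Finset (Fin 3 × Fin N) → α) : Prop :=
  ∃ f : Fin 3 × Fin H.m → Fin 3 × Fin N, Function.Injective f ∧
    (∀ e ∈ H.edges, IsTriEdge (e.image f)) ∧
    ∃ a : α, ∀ e ∈ H.edges, c (e.image f) = a

/-- There is a rainbow loose path `ℒ` in the edge-colored `K^{(3)}_{n,n,n}`. -/
def HasRainbowLooseTri {n : ℕ} (c : Finset (Fin 3 × Fin n) → ℕ) : Prop :=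
  ∃ v : Fin 7 → Fin 3 × Fin n, Function.Injective v ∧
    IsTriEdge {v 0, v 1, v 2} ∧ IsTriEdge {v 2, v 3, v 4} ∧ IsTriEdge {v 4, v 5, v 6} ∧
    c {v 0, v 1, v 2} ≠ c {v 2, v 3, v 4} ∧
    c {v 0, v 1, v 2} ≠ c {v 4, v 5, v 6} ∧
    c {v 2, v 3, v 4} ≠ c {v 4, v 5, v 6}

/-- The 2-colored 3-partite Ramsey number `R'₂(H)`. -/
noncomputable def ramseyTwoTri (H : TriGraph) : ℕ :=
  sInf {N : ℕ | ∀ c : Finset (Fin 3 × Fin N) → Fin 2, H.HasMonoCopy c}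

/-- The 3-partite constrained Ramsey number `f'(H, ℒ)`. -/
noncomputable def constrainedRamseyLooseTri (H : TriGraph) : ℕ :=
  sInf {N : ℕ | ∀ c : Finset (Fin 3 × Fin N) → ℕ, H.HasMonoCopy c ∨ HasRainbowLooseTri c}

section Helpers

lemma fin3_cases {p q r : Fin 3} (hpq : p ≠ q) (hpr : p ≠ r) (hqr : q ≠ r) (i : Fin 3) :
    i = p ∨ i = q ∨ i = r := by
  revert hpq hpr hqr; revert p q r i; decide

lemma exists_ne_ne {N : ℕ} (hN : 3 ≤ N) (u v : Fin N) : ∃ x : Fin N, x ≠ u ∧ x ≠ v := by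
  have h2 : ({u, v} : Finset (Fin N)).card ≤ 2 := by
    have := Finset.card_insert_le u ({v} : Finset (Fin N))
    simpa using this
  have : (({u, v} : Finset (Fin N))ᶜ).Nonempty := by
    rw [← Finset.card_pos, Finset.card_compl]
    have : Fintype.card (Fin N) = N := by simp
    omega
  obtain ⟨x, hx⟩ := this
  simp only [Finset.mem_compl, Finset.mem_insert, Finset.mem_singleton] at hx
  push_neg at hx
  exact ⟨x, hx.1, hx.2⟩

/-- the canonical triedge with coordinates `E`. -/
def edgeF {N : ℕ} (E : Fin 3 → Fin N) : Finset (Fin 3 × Fin N) :=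
  Finset.univ.image (fun i => (i, E i))

lemma edgeF_injective {N : ℕ} (E : Fin 3 → Fin N) :
    Function.Injective (fun i => (i, E i)) := by
  intro a b h
  exact congrArg Prod.fst h

lemma edgeF_isTriEdge {N : ℕ} (E : Fin 3 → Fin N) : IsTriEdge (edgeF E) := by
  constructor
  · rw [edgeF, Finset.card_image_of_injective _ (edgeF_injective E)]
    simp
  · rw [edgeF, Finset.image_image]
    ext i
    simp

lemma mem_edgeF {N : ℕ} {E : Fin 3 → Fin N} {x : Fin 3 × Fin N} :
    x ∈ edgeF E ↔ ∃ i, x = (i, E i) := by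
  simp [edgeF, eq_comm]

lemma edgeF_eq_triple {N : ℕ} {p q r : Fin 3} (hpq : p ≠ q) (hpr : p ≠ r) (hqr : q ≠ r)
    (E : Fin 3 → Fin N) : edgeF E = {(p, E p), (q, E q), (r, E r)} := by
  ext x
  rw [mem_edgeF]
  simp only [Finset.mem_insert, Finset.mem_singleton]
  constructor
  · rintro ⟨i, rfl⟩
    rcases fin3_cases hpq hpr hqr i with h | h | h <;> subst h <;> tauto
  · rintro (h | h | h) <;> exact ⟨_, h⟩

lemma triEdge_repr {N : ℕ} {S : Finset (Fin 3 × Fin N)} (hS : IsTriEdge S) :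
    ∃ E : Fin 3 → Fin N, S = edgeF E := by
  have h : ∀ i : Fin 3, ∃ x : Fin N, (i, x) ∈ S := by
    intro i
    have : i ∈ S.image Prod.fst := hS.2 ▸ Finset.mem_univ i
    obtain ⟨⟨j, x⟩, hmem, hj⟩ := Finset.mem_image.mp this
    exact ⟨x, by cases hj; exact hmem⟩
  choose E hE using h
  refine ⟨E, ?_⟩
  have hsub : edgeF E ⊆ S := by
    intro x hx
    obtain ⟨i, rfl⟩ := mem_edgeF.mp hx
    exact hE i
  have hcard : S.card ≤ (edgeF E).card := by
    rw [(edgeF_isTriEdge E).1, hS.1]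
  exact (Finset.eq_of_subset_of_card_le hsub hcard).symm

end Helpers

section Master

variable {N : ℕ} {c : Finset (Fin 3 × Fin N) → ℕ}

/-- an edge given by values at parts p, q, r. -/
def mk3 {N : ℕ} (p q r : Fin 3) (a b d : Fin N) : Fin 3 → Fin N :=
  fun i => if i = p then a else if i = q then b else d

lemma mk3_p {N : ℕ} {p q r : Fin 3} (a b d : Fin N) : mk3 p q r a b d p = a := by
  simp [mk3]

lemma mk3_q {N : ℕ} {p q r : Fin 3} (hqp : q ≠ p) (a b d : Fin N) : mk3 p q r a b d q = b := by
  simp [mk3, hqp]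

lemma mk3_r {N : ℕ} {p q r : Fin 3} (hrp : r ≠ p) (hrq : r ≠ q) (a b d : Fin N) :
    mk3 p q r a b d r = d := by
  simp [mk3, hrp, hrq]

lemma pfst {α β : Type*} {a b : α} {x y : β} (h : a ≠ b) : (a, x) ≠ (b, y) :=
  fun he => h (congrArg Prod.fst he)

lemma psnd {α β : Type*} {a b : α} {x y : β} (h : x ≠ y) : (a, x) ≠ (b, y) :=
  fun he => h (congrArg Prod.snd he)

lemma inj7 {α : Type*} (x : Fin 7 → α)
    (h01 : x 0 ≠ x 1) (h02 : x 0 ≠ x 2) (h03 : x 0 ≠ x 3) (h04 : x 0 ≠ x 4)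
    (h05 : x 0 ≠ x 5) (h06 : x 0 ≠ x 6) (h12 : x 1 ≠ x 2) (h13 : x 1 ≠ x 3)
    (h14 : x 1 ≠ x 4) (h15 : x 1 ≠ x 5) (h16 : x 1 ≠ x 6) (h23 : x 2 ≠ x 3)
    (h24 : x 2 ≠ x 4) (h25 : x 2 ≠ x 5) (h26 : x 2 ≠ x 6) (h34 : x 3 ≠ x 4)
    (h35 : x 3 ≠ x 5) (h36 : x 3 ≠ x 6) (h45 : x 4 ≠ x 5) (h46 : x 4 ≠ x 6)
    (h56 : x 5 ≠ x 6) : Function.Injective x := by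
  intro a b hab
  fin_cases a <;> fin_cases b <;> first | rfl | simp_all | (exact absurd hab.symm (by assumption))

/-- The master path lemma: any loose path `A – M – B` (with `M` meeting `A` exactly at
part `p` and `B` exactly at part `q`) is not rainbow. -/
lemma master (hrb : ¬HasRainbowLooseTri c) {p q r : Fin 3}
    (hpq : p ≠ q) (hpr : p ≠ r) (hqr : q ≠ r) {A M B : Fin 3 → Fin N}
    (hAB : ∀ i, A i ≠ B i) (h1 : M p = A p) (h2 : M q = B q)
    (h3 : M r ≠ A r) (h4 : M r ≠ B r) :
    c (edgeF A) = c (edgeF M) ∨ c (edgeF A) = c (edgeF B) ∨ c (edgeF M) = c (edgeF B) := by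
  by_contra hcon
  push_neg at hcon
  obtain ⟨n1, n2, n3⟩ := hcon
  apply hrb
  have hMAq : M q ≠ A q := by rw [h2]; exact fun h => hAB q h.symm
  have hMBp : M p ≠ B p := by rw [h1]; exact hAB p
  have e1 : ({(q, A q), (r, A r), (p, A p)} : Finset (Fin 3 × Fin N)) = edgeF A := by
    rw [edgeF_eq_triple hpq hpr hqr A]; ext x; simp; tauto
  have e2 : ({(p, A p), (r, M r), (q, M q)} : Finset (Fin 3 × Fin N)) = edgeF M := by
    rw [edgeF_eq_triple hpq hpr hqr M, h1]; ext x; simp; tauto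
  have e3 : ({(q, M q), (p, B p), (r, B r)} : Finset (Fin 3 × Fin N)) = edgeF B := by
    rw [edgeF_eq_triple hpq hpr hqr B, ← h2]; ext x; simp; tauto
  refine ⟨![(q, A q), (r, A r), (p, A p), (r, M r), (q, M q), (p, B p), (r, B r)],
    ?_, ?_, ?_, ?_, ?_, ?_, ?_⟩
  · have d01 : (((q, A q)) : Fin 3 × Fin N) ≠ (r, A r) := pfst (hqr)
    have d02 : (((q, A q)) : Fin 3 × Fin N) ≠ (p, A p) := pfst (hpq.symm)
    have d03 : (((q, A q)) : Fin 3 × Fin N) ≠ (r, M r) := pfst (hqr)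
    have d04 : (((q, A q)) : Fin 3 × Fin N) ≠ (q, M q) := psnd ((fun h => hMAq h.symm))
    have d05 : (((q, A q)) : Fin 3 × Fin N) ≠ (p, B p) := pfst (hpq.symm)
    have d06 : (((q, A q)) : Fin 3 × Fin N) ≠ (r, B r) := pfst (hqr)
    have d12 : (((r, A r)) : Fin 3 × Fin N) ≠ (p, A p) := pfst (hpr.symm)
    have d13 : (((r, A r)) : Fin 3 × Fin N) ≠ (r, M r) := psnd ((fun h => h3 h.symm))
    have d14 : (((r, A r)) : Fin 3 × Fin N) ≠ (q, M q) := pfst (hqr.symm)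
    have d15 : (((r, A r)) : Fin 3 × Fin N) ≠ (p, B p) := pfst (hpr.symm)
    have d16 : (((r, A r)) : Fin 3 × Fin N) ≠ (r, B r) := psnd ((hAB r))
    have d23 : (((p, A p)) : Fin 3 × Fin N) ≠ (r, M r) := pfst (hpr)
    have d24 : (((p, A p)) : Fin 3 × Fin N) ≠ (q, M q) := pfst (hpq)
    have d25 : (((p, A p)) : Fin 3 × Fin N) ≠ (p, B p) := psnd ((hAB p))
    have d26 : (((p, A p)) : Fin 3 × Fin N) ≠ (r, B r) := pfst (hpr)
    have d34 : (((r, M r)) : Fin 3 × Fin N) ≠ (q, M q) := pfst (hqr.symm)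
    have d35 : (((r, M r)) : Fin 3 × Fin N) ≠ (p, B p) := pfst (hpr.symm)
    have d36 : (((r, M r)) : Fin 3 × Fin N) ≠ (r, B r) := psnd (h4)
    have d45 : (((q, M q)) : Fin 3 × Fin N) ≠ (p, B p) := pfst (hpq.symm)
    have d46 : (((q, M q)) : Fin 3 × Fin N) ≠ (r, B r) := pfst (hqr)
    have d56 : (((p, B p)) : Fin 3 × Fin N) ≠ (r, B r) := pfst (hpr)
    exact inj7 _ d01 d02 d03 d04 d05 d06 d12 d13 d14 d15 d16 d23 d24 d25 d26 d34 d35 d36 d45 d46 d56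
  · show IsTriEdge ({(q, A q), (r, A r), (p, A p)} : Finset (Fin 3 × Fin N))
    rw [e1]; exact edgeF_isTriEdge A
  · show IsTriEdge ({(p, A p), (r, M r), (q, M q)} : Finset (Fin 3 × Fin N))
    rw [e2]; exact edgeF_isTriEdge M
  · show IsTriEdge ({(q, M q), (p, B p), (r, B r)} : Finset (Fin 3 × Fin N))
    rw [e3]; exact edgeF_isTriEdge B
  · show c ({(q, A q), (r, A r), (p, A p)} : Finset (Fin 3 × Fin N)) ≠
      c ({(p, A p), (r, M r), (q, M q)} : Finset (Fin 3 × Fin N))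
    rw [e1, e2]; exact n1
  · show c ({(q, A q), (r, A r), (p, A p)} : Finset (Fin 3 × Fin N)) ≠
      c ({(q, M q), (p, B p), (r, B r)} : Finset (Fin 3 × Fin N))
    rw [e1, e3]; exact n2
  · show c ({(p, A p), (r, M r), (q, M q)} : Finset (Fin 3 × Fin N)) ≠
      c ({(q, M q), (p, B p), (r, B r)} : Finset (Fin 3 × Fin N))
    rw [e2, e3]; exact n3

end Master

section Structure1

variable {N : ℕ} {c : Finset (Fin 3 × Fin N) → ℕ}

/-- disjointness of coordinate edges -/
def disj {N : ℕ} (E F : Fin 3 → Fin N) : Prop := ∀ i, E i ≠ F i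

/-- sharing at least two coordinates -/
def near {N : ℕ} (E F : Fin 3 → Fin N) : Prop :=
  ∃ i j : Fin 3, i ≠ j ∧ E i = F i ∧ E j = F j

lemma disj.symm {N : ℕ} {E F : Fin 3 → Fin N} (h : disj E F) : disj F E :=
  fun i => (h i).symm

lemma near_elim {N : ℕ} {p q r : Fin 3} (hpq : p ≠ q) (hpr : p ≠ r) (hqr : q ≠ r)
    {E F : Fin 3 → Fin N} (h : near E F) :
    (E p = F p ∧ E q = F q) ∨ (E p = F p ∧ E r = F r) ∨ (E q = F q ∧ E r = F r) := by
  obtain ⟨i, j, hij, h1, h2⟩ := h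
  rcases fin3_cases hpq hpr hqr i with hi | hi | hi <;>
    rcases fin3_cases hpq hpr hqr j with hj | hj | hj <;>
    subst hi <;> subst hj <;> first | (exact absurd rfl hij) | tauto

lemma near_intro {N : ℕ} {i j : Fin 3} (hij : i ≠ j) {E F : Fin 3 → Fin N}
    (h1 : E i = F i) (h2 : E j = F j) : near E F := ⟨i, j, hij, h1, h2⟩

lemma eq_of_coords {N : ℕ} {p q r : Fin 3} (hpq : p ≠ q) (hpr : p ≠ r) (hqr : q ≠ r)
    {E F : Fin 3 → Fin N} (h1 : E p = F p) (h2 : E q = F q) (h3 : E r = F r) : E = F := by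
  funext i
  rcases fin3_cases hpq hpr hqr i with h | h | h <;> subst h <;> assumption

lemma other_parts (p : Fin 3) : ∃ q r : Fin 3, p ≠ q ∧ p ≠ r ∧ q ≠ r := by
  fin_cases p
  · exact ⟨1, 2, by decide, by decide, by decide⟩
  · exact ⟨0, 2, by decide, by decide, by decide⟩
  · exact ⟨0, 1, by decide, by decide, by decide⟩

/-- Three pairwise disjoint edges can't have pairwise distinct colors. -/
lemma P3 (hrb : ¬HasRainbowLooseTri c) {A B T : Fin 3 → Fin N}
    (hAB : disj A B) (hAT : disj A T) (hBT : disj B T)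
    (cAB : c (edgeF A) ≠ c (edgeF B)) (cAT : c (edgeF A) ≠ c (edgeF T))
    (cBT : c (edgeF B) ≠ c (edgeF T)) : False := by
  have h01 : (0 : Fin 3) ≠ 1 := by decide
  have h02 : (0 : Fin 3) ≠ 2 := by decide
  have h12 : (1 : Fin 3) ≠ 2 := by decide
  set M : Fin 3 → Fin N := mk3 0 1 2 (A 0) (B 1) (T 2) with hM
  have m0 : M 0 = A 0 := mk3_p _ _ _
  have m1 : M 1 = B 1 := mk3_q (by decide) _ _ _
  have m2 : M 2 = T 2 := mk3_r (by decide) (by decide) _ _ _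
  -- path A – M – B
  have c1 := master hrb h01 h02 h12 hAB m0 (m1 ▸ rfl)
    (by rw [m2]; exact (hAT 2).symm) (by rw [m2]; exact (hBT 2).symm)
  -- path A – M – T  (M shares part 0 with A, part 2 with T)
  have c2 := master hrb h02 h01 (by decide : (2:Fin 3) ≠ 1) hAT m0 m2
    (by rw [m1]; exact (hAB 1).symm) (by rw [m1]; exact hBT 1)
  -- path B – M – T  (M shares part 1 with B, part 2 with T)
  have c3 := master hrb h12 (by decide : (1:Fin 3) ≠ 0) (by decide : (2:Fin 3) ≠ 0) hBT m1 m2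
    (by rw [m0]; exact hAB 0) (by rw [m0]; exact hAT 0)
  rcases c1 with h | h | h <;> rcases c2 with h' | h' | h' <;> rcases c3 with h'' | h'' | h'' <;>
    first
      | exact cAB (by grind)
      | exact cAT (by grind)
      | exact cBT (by grind)
      | exact cAB (h.trans h''.symm) |> absurd <| fun _ => trivial
      | grind

end Structure1

section Structure2

variable {N : ℕ} {c : Finset (Fin 3 × Fin N) → ℕ}

lemma third_part {p q : Fin 3} (h : p ≠ q) : ∃ r, p ≠ r ∧ q ≠ r := by
  revert h; revert p q; decide

lemma disj_of_coords {N : ℕ} {p q r : Fin 3} (hpq : p ≠ q) (hpr : p ≠ r) (hqr : q ≠ r)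
    {E F : Fin 3 → Fin N} (h1 : E p ≠ F p) (h2 : E q ≠ F q) (h3 : E r ≠ F r) : disj E F := by
  intro i
  rcases fin3_cases hpq hpr hqr i with h | h | h <;> subst h <;> assumption

/-- spreading lemma: if `R` meets `P` exactly at part `p`, is disjoint from `Q`, and
the three colors are pairwise distinct, then all edges `(x, R q, Q r)` have `R`'s color. -/
lemma SPREAD1 (hrb : ¬HasRainbowLooseTri c) {p q r : Fin 3}
    (hpq : p ≠ q) (hpr : p ≠ r) (hqr : q ≠ r) {P Q R : Fin 3 → Fin N}
    (hPQ : disj P Q) (hRQ : disj R Q) (hRp : R p = P p) (hRq : R q ≠ P q) (hRr : R r ≠ P r)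
    (cPQ : c (edgeF P) ≠ c (edgeF Q)) (cRP : c (edgeF R) ≠ c (edgeF P))
    (cRQ : c (edgeF R) ≠ c (edgeF Q))
    {x : Fin N} (hxP : x ≠ P p) (hxQ : x ≠ Q p) :
    c (edgeF (mk3 p q r x (R q) (Q r))) = c (edgeF R) := by
  set M : Fin 3 → Fin N := mk3 p q r x (R q) (Q r) with hMdef
  have mp : M p = x := mk3_p _ _ _
  have mq : M q = R q := mk3_q hpq.symm _ _ _
  have mr : M r = Q r := mk3_r hpr.symm hqr.symm _ _ _
  -- path R – M – Q : M shares part q with R, part r with Q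
  have c1 := master hrb hqr hpq.symm hpr.symm (hRQ : ∀ i, R i ≠ Q i) mq mr
    (by rw [mp, hRp]; exact hxP) (by rw [mp]; exact hxQ)
  -- path P – R – M : middle R shares part p with P, part q with M
  have hPM : ∀ i, P i ≠ M i := disj_of_coords hpq hpr hqr
    (by rw [mp]; exact fun h => hxP h.symm) (by rw [mq]; exact fun h => hRq h.symm)
    (by rw [mr]; exact hPQ r)
  have c2 := master hrb hpq hpr hqr hPM hRp mq.symm hRr (by rw [mr]; exact hRQ r)
  rcases c1 with h | h | h <;> rcases c2 with h' | h' | h' <;> grind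

/-- no third-colored edge meets one of a disjoint pair exactly once avoiding the other. -/
lemma KILL10 (hrb : ¬HasRainbowLooseTri c) (hN : 3 ≤ N) {p q r : Fin 3}
    (hpq : p ≠ q) (hpr : p ≠ r) (hqr : q ≠ r) {A B T : Fin 3 → Fin N}
    (hAB : disj A B) (hTB : disj T B) (hTp : T p = A p) (hTq : T q ≠ A q) (hTr : T r ≠ A r)
    (cAB : c (edgeF A) ≠ c (edgeF B)) (cTA : c (edgeF T) ≠ c (edgeF A))
    (cTB : c (edgeF T) ≠ c (edgeF B)) : False := by
  obtain ⟨x, hxA, hxB⟩ := exists_ne_ne hN (A p) (B p)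
  -- the two spread edges of color (T)
  have hMcol : c (edgeF (mk3 p q r x (T q) (B r))) = c (edgeF T) :=
    SPREAD1 hrb hpq hpr hqr hAB hTB hTp hTq hTr cAB cTA cTB hxA hxB
  have hZcol : c (edgeF (mk3 p r q x (T r) (B q))) = c (edgeF T) :=
    SPREAD1 hrb hpr hpq hqr.symm hAB hTB hTp hTr hTq cAB cTA cTB hxA hxB
  set M : Fin 3 → Fin N := mk3 p q r x (T q) (B r) with hMdef
  have mp : M p = x := mk3_p _ _ _
  have mq : M q = T q := mk3_q hpq.symm _ _ _
  have mr : M r = B r := mk3_r hpr.symm hqr.symm _ _ _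
  set Z : Fin 3 → Fin N := mk3 p r q x (T r) (B q) with hZdef
  have zp : Z p = x := mk3_p _ _ _
  have zr : Z r = T r := mk3_q hpr.symm _ _ _
  have zq : Z q = B q := mk3_r hpq.symm hqr _ _ _
  -- second spread: (P,Q,R) := (M,A,B) at parts (r,p,q), fresh coordinate w := T r
  have hMA : disj M A := disj_of_coords hpq hpr hqr
    (by rw [mp]; exact hxA) (by rw [mq]; exact hTq) (by rw [mr]; exact (hAB r).symm)
  have hBA : disj B A := hAB.symm
  have hW : c (edgeF (mk3 r p q (T r) (B p) (A q))) = c (edgeF B) := by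
    refine SPREAD1 hrb hpr.symm hqr.symm hpq hMA hBA (by rw [mr]) ?_ ?_ ?_ ?_ ?_
      (x := T r) ?_ ?_
    · rw [mp]; exact hxB.symm
    · rw [mq]; exact (hTB q).symm
    · rw [hMcol]; exact cTA
    · rw [hMcol]; exact cTB.symm
    · exact cAB.symm
    · rw [mr]; exact hTB r
    · exact hTr
  set W : Fin 3 → Fin N := mk3 r p q (T r) (B p) (A q) with hWdef
  have wr : W r = T r := mk3_p _ _ _
  have wp : W p = B p := mk3_q hpr _ _ _
  have wq : W q = A q := mk3_r hqr hpq.symm _ _ _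
  -- final rainbow path Z – W – A : W shares part r with Z, part q with A
  have hZA : ∀ i, Z i ≠ A i := disj_of_coords hpq hpr hqr
    (by rw [zp]; exact hxA) (by rw [zq]; exact (hAB q).symm) (by rw [zr]; exact hTr)
  have cfin := master hrb hqr.symm (by exact hpr.symm : r ≠ p) (by exact hpq.symm : q ≠ p)
    hZA (by rw [wr, zr]) wq (by rw [wp, zp]; exact hxB.symm) (by rw [wp]; exact (hAB p).symm)
  rcases cfin with h | h | h
  · rw [hZcol, hW] at h; exact cTB h
  · rw [hZcol] at h; exact cTA h
  · rw [hW] at h; exact cAB h.symm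

section Star

variable {N : ℕ} {c : Finset (Fin 3 × Fin N) → ℕ}

/-- Any edge of a third color is "near" (shares ≥ 2 vertices with) one of a disjoint,
differently-colored pair. -/
lemma STAR (hrb : ¬HasRainbowLooseTri c) (hN : 3 ≤ N) {A B T : Fin 3 → Fin N}
    (hAB : disj A B) (cAB : c (edgeF A) ≠ c (edgeF B)) (cTA : c (edgeF T) ≠ c (edgeF A))
    (cTB : c (edgeF T) ≠ c (edgeF B)) : near T A ∨ near T B := by
  by_contra hcon
  push_neg at hcon
  obtain ⟨hnA, hnB⟩ := hcon
  by_cases hpA : ∃ p, T p = A p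
  · obtain ⟨p, hp⟩ := hpA
    have hArest : ∀ j, j ≠ p → T j ≠ A j := fun j hj hj2 => hnA ⟨p, j, fun h => hj h.symm, hp, hj2⟩
    by_cases hqB : ∃ q, T q = B q
    · obtain ⟨q, hq⟩ := hqB
      have hpq : p ≠ q := by
        rintro rfl
        exact hAB p (hp.symm.trans hq)
      have hBrest : ∀ j, j ≠ q → T j ≠ B j := fun j hj hj2 =>
        hnB ⟨q, j, fun h => hj h.symm, hq, hj2⟩
      obtain ⟨r, hpr, hqr⟩ := third_part hpq
      have := master hrb hpq hpr hqr (hAB : ∀ i, A i ≠ B i) hp hq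
        (hArest r (Ne.symm hpr)) (hBrest r (Ne.symm hqr))
      rcases this with h | h | h
      · exact cTA h.symm
      · exact cAB h
      · exact cTB h
    · push_neg at hqB
      obtain ⟨q, r, hpq, hpr, hqr⟩ := other_parts p
      exact KILL10 hrb hN hpq hpr hqr hAB (fun i => hqB i) hp
        (hArest q (Ne.symm hpq)) (hArest r (Ne.symm hpr)) cAB cTA cTB
  · push_neg at hpA
    by_cases hqB : ∃ q, T q = B q
    · obtain ⟨q, hq⟩ := hqB
      have hBrest : ∀ j, j ≠ q → T j ≠ B j := fun j hj hj2 =>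
        hnB ⟨q, j, fun h => hj h.symm, hq, hj2⟩
      obtain ⟨q', r, hqq', hqr, hq'r⟩ := other_parts q
      exact KILL10 hrb hN hqq' hqr hq'r hAB.symm (fun i => hpA i) hq
        (hBrest q' (Ne.symm hqq')) (hBrest r (Ne.symm hqr)) cAB.symm cTB cTA
    · push_neg at hqB
      exact P3 hrb hAB (fun i => (hpA i).symm) (fun i => (hqB i).symm) cAB cTA.symm cTB.symm

end Star

section Cover

variable {N : ℕ} {c : Finset (Fin 3 × Fin N) → ℕ}

lemma not_near2 {N : ℕ} {p q r : Fin 3} (hpq : p ≠ q) (hpr : p ≠ r) (hqr : q ≠ r)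
    {E F : Fin 3 → Fin N} (h1 : E q ≠ F q) (h2 : E r ≠ F r) : ¬ near E F := by
  intro h
  rcases near_elim hpq hpr hqr h with ⟨_, h'⟩ | ⟨_, h'⟩ | ⟨h', _⟩ <;> contradiction

/-- Branch 1 (`H r ≠ B r`): the `(A p, z, B r)` edges are `B`-colored. -/
lemma CF1 (hrb : ¬HasRainbowLooseTri c) (hN : 3 ≤ N) {p q r : Fin 3}
    (hpq : p ≠ q) (hpr : p ≠ r) (hqr : q ≠ r) {A B H : Fin 3 → Fin N}
    (hAB : disj A B) (cAB : c (edgeF A) ≠ c (edgeF B))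
    (hHp : H p = A p) (hHq : H q = A q)
    (cHA : c (edgeF H) ≠ c (edgeF A)) (cHB : c (edgeF H) ≠ c (edgeF B))
    (hHBr : H r ≠ B r)
    {z : Fin N} (hzA : z ≠ A q) (hzB : z ≠ B q) :
    c (edgeF (mk3 p q r (A p) z (B r))) = c (edgeF B) := by
  set Y : Fin 3 → Fin N := mk3 p q r (A p) z (B r) with hYdef
  have yp : Y p = A p := mk3_p _ _ _
  have yq : Y q = z := mk3_q hpq.symm _ _ _
  have yr : Y r = B r := mk3_r hpr.symm hqr.symm _ _ _
  have hHB : disj H B := disj_of_coords hpq hpr hqr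
    (by rw [hHp]; exact hAB p) (by rw [hHq]; exact hAB q) hHBr
  have c1 := master hrb hpr hpq hqr.symm (hHB : ∀ i, H i ≠ B i)
    (by rw [yp, hHp] : Y p = H p) yr (by rw [yq, hHq]; exact hzA) (by rw [yq]; exact hzB)
  rcases c1 with h | h | h
  · exfalso
    have cYA : c (edgeF Y) ≠ c (edgeF A) := by rw [← h]; exact cHA
    have cYB : c (edgeF Y) ≠ c (edgeF B) := by rw [← h]; exact cHB
    rcases STAR hrb hN hAB cAB cYA cYB with hnear | hnear
    · exact not_near2 hpq hpr hqr (by rw [yq]; exact hzA)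
        (by rw [yr]; exact (hAB r).symm) hnear
    · exact not_near2 hpr.symm hqr.symm hpq (by rw [yp]; exact hAB p)
        (by rw [yq]; exact hzB) hnear
  · exact absurd h cHB
  · exact h

/-- Branch 1, shape `{q,r}` is impossible. -/
lemma B1iii (hrb : ¬HasRainbowLooseTri c) (hN : 3 ≤ N) {p q r : Fin 3}
    (hpq : p ≠ q) (hpr : p ≠ r) (hqr : q ≠ r) {A B H F : Fin 3 → Fin N}
    (hAB : disj A B) (cAB : c (edgeF A) ≠ c (edgeF B))
    (hHp : H p = A p) (hHq : H q = A q)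
    (cHA : c (edgeF H) ≠ c (edgeF A)) (cHB : c (edgeF H) ≠ c (edgeF B))
    (hHBr : H r ≠ B r)
    (hFp : F p ≠ A p) (hFq : F q = B q) (hFr : F r = B r)
    (cFB : c (edgeF F) ≠ c (edgeF B)) : False := by
  obtain ⟨z₀, hz₀A, hz₀B⟩ := exists_ne_ne hN (A q) (B q)
  have hY := CF1 hrb hN hpq hpr hqr hAB cAB hHp hHq cHA cHB hHBr hz₀A hz₀B
  set Y : Fin 3 → Fin N := mk3 p q r (A p) z₀ (B r) with hYdef
  have yp : Y p = A p := mk3_p _ _ _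
  have yq : Y q = z₀ := mk3_q hpq.symm _ _ _
  have yr : Y r = B r := mk3_r hpr.symm hqr.symm _ _ _
  have hAF : ∀ i, A i ≠ F i := disj_of_coords hpq hpr hqr
    (fun h => hFp h.symm) (by rw [hFq]; exact hAB q) (by rw [hFr]; exact hAB r)
  have c1 := master hrb hpr hpq hqr.symm hAF yp (by rw [yr, hFr])
    (by rw [yq]; exact hz₀A) (by rw [yq, hFq]; exact hz₀B)
  have hAFcol : c (edgeF A) = c (edgeF F) := by
    rcases c1 with h | h | h <;> grind
  have hHF : ∀ i, H i ≠ F i := disj_of_coords hpq hpr hqr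
    (by rw [hHp]; exact fun h => hFp h.symm) (by rw [hHq, hFq]; exact hAB q)
    (by rw [hFr]; exact hHBr)
  have c2 := master hrb hpr hpq hqr.symm hHF (by rw [yp, hHp] : Y p = H p) (by rw [yr, hFr])
    (by rw [yq, hHq]; exact hz₀A) (by rw [yq, hFq]; exact hz₀B)
  rcases c2 with h | h | h <;> grind

section Branch1
set_option maxHeartbeats 1000000

variable {N : ℕ} {c : Finset (Fin 3 × Fin N) → ℕ}

/-- Branch 1 of the cover lemma: `H r ≠ B r`. -/
lemma B1 (hrb : ¬HasRainbowLooseTri c) (hN : 3 ≤ N) {p q r : Fin 3}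
    (hpq : p ≠ q) (hpr : p ≠ r) (hqr : q ≠ r) {A B H F : Fin 3 → Fin N}
    (hAB : disj A B) (cAB : c (edgeF A) ≠ c (edgeF B))
    (hHp : H p = A p) (hHq : H q = A q) (hHr : H r ≠ A r)
    (cHA : c (edgeF H) ≠ c (edgeF A)) (cHB : c (edgeF H) ≠ c (edgeF B))
    (hHBr : H r ≠ B r)
    (hFp : F p ≠ A p) (hFq : F q ≠ A q) (cFB : c (edgeF F) ≠ c (edgeF B)) : False := by
  obtain ⟨z₀, hz₀A, hz₀B⟩ := exists_ne_ne hN (A q) (B q)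
  obtain ⟨z₁, hz₁A, hz₁B⟩ := exists_ne_ne hN (A p) (B p)
  have hY := CF1 hrb hN hpq hpr hqr hAB cAB hHp hHq cHA cHB hHBr hz₀A hz₀B
  have hY' := CF1 hrb hN hpq.symm hqr hpr hAB cAB hHq hHp cHA cHB hHBr hz₁A hz₁B
  set Y : Fin 3 → Fin N := mk3 p q r (A p) z₀ (B r) with hYdef
  have yp : Y p = A p := mk3_p _ _ _
  have yq : Y q = z₀ := mk3_q hpq.symm _ _ _
  have yr : Y r = B r := mk3_r hpr.symm hqr.symm _ _ _
  set Y' : Fin 3 → Fin N := mk3 q p r (A q) z₁ (B r) with hY'def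
  have y'q : Y' q = A q := mk3_p _ _ _
  have y'p : Y' p = z₁ := mk3_q hpq _ _ _
  have y'r : Y' r = B r := mk3_r hqr.symm hpr.symm _ _ _
  by_cases cFA : c (edgeF F) = c (edgeF A)
  · -- F has A's color
    by_cases hFrH : F r = H r
    · -- F r = H r
      by_cases hFqB : F q = B q
      · -- path Y – H – F
        have hYF : ∀ i, Y i ≠ F i := disj_of_coords hpq hpr hqr
          (by rw [yp]; exact fun h => hFp h.symm) (by rw [yq, hFqB]; exact hz₀B)
          (by rw [yr, hFrH]; exact hHBr.symm)
        have := master hrb hpr hpq hqr.symm hYF (by rw [hHp, yp] : H p = Y p) hFrH.symm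
          (by rw [hHq, yq]; exact fun h => hz₀A h.symm) (by rw [hHq, hFqB]; exact hAB q)
        rcases this with h | h | h <;> grind
      · by_cases hFpB : F p = B p
        · -- path Y' – H – F
          have hY'F : ∀ i, Y' i ≠ F i := disj_of_coords hpq hpr hqr
            (by rw [y'p, hFpB]; exact hz₁B) (by rw [y'q]; exact fun h => hFq h.symm)
            (by rw [y'r, hFrH]; exact hHBr.symm)
          have := master hrb hqr hpq.symm hpr.symm hY'F (by rw [hHq, y'q] : H q = Y' q)
            hFrH.symm (by rw [hHp, y'p]; exact fun h => hz₁A h.symm)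
            (by rw [hHp, hFpB]; exact hAB p)
          rcases this with h | h | h <;> grind
        · -- F avoids B entirely: STAR (F,B) on H
          have hFB : disj F B := disj_of_coords hpq hpr hqr hFpB hFqB
            (by rw [hFrH]; exact hHBr)
          have cFH : c (edgeF F) ≠ c (edgeF H) := fun h => cHA (h.symm.trans cFA)
          rcases STAR hrb hN hFB cFB cFH.symm cHB with hnear | hnear
          · exact not_near2 hpr.symm hqr.symm hpq (by rw [hHp]; exact fun h => hFp h.symm)
              (by rw [hHq]; exact fun h => hFq h.symm) hnear
          · exact not_near2 hpr.symm hqr.symm hpq (by rw [hHp]; exact hAB p)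
              (by rw [hHq]; exact hAB q) hnear
    · -- F r ≠ H r : F and H disjoint
      have hFH : disj F H := disj_of_coords hpq hpr hqr
        (by rw [hHp]; exact hFp) (by rw [hHq]; exact hFq) hFrH
      have cFH : c (edgeF F) ≠ c (edgeF H) := fun h => cHA (h.symm.trans cFA)
      rcases STAR hrb hN hFH cFH cFB.symm cHB.symm with hnear | hnear
      · -- B near F
        rcases near_elim hpq hpr hqr hnear with ⟨h1, h2⟩ | ⟨h1, h2⟩ | ⟨h1, h2⟩
        · -- B p = F p, B q = F q
          have hFrB : F r ≠ B r := by
            intro h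
            exact cFB (by rw [eq_of_coords hpq hpr hqr h1.symm h2.symm h])
          have cYF : c (edgeF Y) ≠ c (edgeF F) := by rw [hY]; exact cFB.symm
          have cYH : c (edgeF Y) ≠ c (edgeF H) := by rw [hY]; exact cHB.symm
          rcases STAR hrb hN hFH cFH cYF cYH with hn | hn
          · exact not_near2 hpq hpr hqr (by rw [yq, ← h2]; exact hz₀B)
              (by rw [yr]; exact fun h => hFrB h.symm) hn
          · exact not_near2 hpq hpr hqr (by rw [yq, hHq]; exact hz₀A)
              (by rw [yr]; exact fun h => hHBr h.symm) hn
        · -- B p = F p, B r = F r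
          have cY'F : c (edgeF Y') ≠ c (edgeF F) := by rw [hY']; exact cFB.symm
          have cY'H : c (edgeF Y') ≠ c (edgeF H) := by rw [hY']; exact cHB.symm
          rcases STAR hrb hN hFH cFH cY'F cY'H with hn | hn
          · exact not_near2 hpr.symm hqr.symm hpq (by rw [y'p, ← h1]; exact hz₁B)
              (by rw [y'q]; exact fun h => hFq h.symm) hn
          · exact not_near2 hpq.symm hqr hpr (by rw [y'p, hHp]; exact hz₁A)
              (by rw [y'r]; exact fun h => hHBr h.symm) hn
        · -- B q = F q, B r = F r : shape (iii)
          exact B1iii hrb hN hpq hpr hqr hAB cAB hHp hHq cHA cHB hHBr hFp h1.symm h2.symm cFB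
      · -- B near H : impossible
        exact not_near2 hpr.symm hqr.symm hpq (by rw [hHp]; exact (hAB p).symm)
          (by rw [hHq]; exact (hAB q).symm) hnear
  · -- F's color differs from both A's and B's
    rcases STAR hrb hN hAB cAB cFA cFB with hnear | hnear
    · exact not_near2 hpr.symm hqr.symm hpq hFp hFq hnear
    · rcases near_elim hpq hpr hqr hnear with ⟨h1, h2⟩ | ⟨h1, h2⟩ | ⟨h1, h2⟩
      · -- F p = B p, F q = B q
        have hFrB : F r ≠ B r := by
          intro h
          exact cFB (by rw [eq_of_coords hpq hpr hqr h1 h2 h])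
        by_cases hFrA : F r = A r
        · -- path F – A – Y
          have hFY : ∀ i, F i ≠ Y i := disj_of_coords hpq hpr hqr
            (by rw [yp, h1]; exact (hAB p).symm) (by rw [yq, h2]; exact hz₀B.symm)
            (by rw [yr, hFrA]; exact hAB r)
          have := master hrb hpr.symm hqr.symm hpq hFY hFrA.symm yp.symm
            (by rw [h2]; exact hAB q) (by rw [yq]; exact fun h => hz₀A h.symm)
          rcases this with h | h | h <;> grind
        · -- STAR (F,A) on Y
          have hFA : disj F A := disj_of_coords hpq hpr hqr hFp hFq hFrA
          have cYF : c (edgeF Y) ≠ c (edgeF F) := by rw [hY]; exact cFB.symm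
          have cYA : c (edgeF Y) ≠ c (edgeF A) := by rw [hY]; exact cAB.symm
          rcases STAR hrb hN hFA (fun h => cFA h) cYF cYA with hn | hn
          · exact not_near2 hpq hpr hqr (by rw [yq, h2]; exact hz₀B)
              (by rw [yr]; exact fun h => hFrB h.symm) hn
          · exact not_near2 hpq hpr hqr (by rw [yq]; exact hz₀A)
              (by rw [yr]; exact (hAB r).symm) hn
      · -- F p = B p, F r = B r : shape (iii) with p,q swapped
        exact B1iii hrb hN hpq.symm hqr hpr hAB cAB hHq hHp cHA cHB hHBr hFq h1 h2 cFB
      · -- F q = B q, F r = B r : shape (iii)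
        exact B1iii hrb hN hpq hpr hqr hAB cAB hHp hHq cHA cHB hHBr hFp h1 h2 cFB

end Branch1

section Branch2
set_option maxHeartbeats 1000000

variable {N : ℕ} {c : Finset (Fin 3 × Fin N) → ℕ}

/-- Branch 2 (`H r = B r`): the `(A p, z, w)` edges are `B`-colored. -/
lemma CG1 (hrb : ¬HasRainbowLooseTri c) (hN : 3 ≤ N) {p q r : Fin 3}
    (hpq : p ≠ q) (hpr : p ≠ r) (hqr : q ≠ r) {A B H : Fin 3 → Fin N}
    (hAB : disj A B) (cAB : c (edgeF A) ≠ c (edgeF B))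
    (hHp : H p = A p) (hHq : H q = A q)
    (cHA : c (edgeF H) ≠ c (edgeF A)) (cHB : c (edgeF H) ≠ c (edgeF B))
    (hHBr2 : H r = B r)
    {z w : Fin N} (hzA : z ≠ A q) (hzB : z ≠ B q) (hwA : w ≠ A r) (hwB : w ≠ B r) :
    c (edgeF (mk3 p q r (A p) z w)) = c (edgeF B) := by
  set X : Fin 3 → Fin N := mk3 p q r (A p) z w with hXdef
  have xp : X p = A p := mk3_p _ _ _
  have xq : X q = z := mk3_q hpq.symm _ _ _
  have xr : X r = w := mk3_r hpr.symm hqr.symm _ _ _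
  have hXB : ∀ i, X i ≠ B i := disj_of_coords hpq hpr hqr
    (by rw [xp]; exact hAB p) (by rw [xq]; exact hzB) (by rw [xr]; exact hwB)
  -- path X – H – B : middle H shares part p with X, part r with B
  have c1 := master hrb hpr hpq hqr.symm hXB (by rw [hHp, xp] : H p = X p) hHBr2
    (by rw [hHq, xq]; exact fun h => hzA h.symm) (by rw [hHq]; exact hAB q)
  rcases c1 with h | h | h
  · exfalso
    have cXA : c (edgeF X) ≠ c (edgeF A) := by rw [h]; exact cHA
    have cXB : c (edgeF X) ≠ c (edgeF B) := by rw [h]; exact cHB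
    rcases STAR hrb hN hAB cAB cXA cXB with hnear | hnear
    · exact not_near2 hpq hpr hqr (by rw [xq]; exact hzA) (by rw [xr]; exact hwA) hnear
    · exact not_near2 hpq hpr hqr (by rw [xq]; exact hzB) (by rw [xr]; exact hwB) hnear
  · exact h
  · exact absurd h cHB

/-- Branch 2, shape `{q,r}` is impossible. -/
lemma B2qr (hrb : ¬HasRainbowLooseTri c) (hN : 3 ≤ N) {p q r : Fin 3}
    (hpq : p ≠ q) (hpr : p ≠ r) (hqr : q ≠ r) {A B H F : Fin 3 → Fin N}
    (hAB : disj A B) (cAB : c (edgeF A) ≠ c (edgeF B))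
    (hHp : H p = A p) (hHq : H q = A q)
    (cHA : c (edgeF H) ≠ c (edgeF A)) (cHB : c (edgeF H) ≠ c (edgeF B))
    (hHBr2 : H r = B r)
    (hFp : F p ≠ A p) (hFq : F q = B q) (hFr : F r = B r)
    (cFB : c (edgeF F) ≠ c (edgeF B)) : False := by
  obtain ⟨z₀, hz₀A, hz₀B⟩ := exists_ne_ne hN (A q) (B q)
  obtain ⟨w₀, hw₀A, hw₀B⟩ := exists_ne_ne hN (A r) (B r)
  have hX := CG1 hrb hN hpq hpr hqr hAB cAB hHp hHq cHA cHB hHBr2 hz₀A hz₀B hw₀A hw₀B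
  set X : Fin 3 → Fin N := mk3 p q r (A p) z₀ w₀ with hXdef
  have xp : X p = A p := mk3_p _ _ _
  have xq : X q = z₀ := mk3_q hpq.symm _ _ _
  have xr : X r = w₀ := mk3_r hpr.symm hqr.symm _ _ _
  have hFX : ∀ i, F i ≠ X i := disj_of_coords hpq hpr hqr
    (by rw [xp]; exact hFp) (by rw [hFq, xq]; exact hz₀B.symm)
    (by rw [hFr, xr]; exact hw₀B.symm)
  -- path F – H – X
  have c1 := master hrb hpr.symm hqr.symm hpq hFX (by rw [hHBr2, hFr] : H r = F r)
    (by rw [hHp, xp] : H p = X p) (by rw [hHq, hFq]; exact hAB q)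
    (by rw [hHq, xq]; exact fun h => hz₀A h.symm)
  have hFH : c (edgeF F) = c (edgeF H) := by
    rcases c1 with h | h | h <;> grind
  have hFA : disj F A := disj_of_coords hpq hpr hqr hFp
    (by rw [hFq]; exact (hAB q).symm) (by rw [hFr]; exact (hAB r).symm)
  have cFA : c (edgeF F) ≠ c (edgeF A) := fun h => cHA (hFH.symm.trans h)
  have cXF : c (edgeF X) ≠ c (edgeF F) := by rw [hX]; exact cFB.symm
  have cXA : c (edgeF X) ≠ c (edgeF A) := by rw [hX]; exact cAB.symm
  rcases STAR hrb hN hFA cFA cXF cXA with hnear | hnear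
  · exact not_near2 hpq hpr hqr (by rw [xq, hFq]; exact hz₀B)
      (by rw [xr, hFr]; exact hw₀B) hnear
  · exact not_near2 hpq hpr hqr (by rw [xq]; exact hz₀A) (by rw [xr]; exact hw₀A) hnear

end Branch2

section Branch2Main
set_option maxHeartbeats 1000000

variable {N : ℕ} {c : Finset (Fin 3 × Fin N) → ℕ}

/-- Branch 2 of the cover lemma: `H r = B r`. -/
lemma B2 (hrb : ¬HasRainbowLooseTri c) (hN : 3 ≤ N) {p q r : Fin 3}
    (hpq : p ≠ q) (hpr : p ≠ r) (hqr : q ≠ r) {A B H F : Fin 3 → Fin N}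
    (hAB : disj A B) (cAB : c (edgeF A) ≠ c (edgeF B))
    (hHp : H p = A p) (hHq : H q = A q)
    (cHA : c (edgeF H) ≠ c (edgeF A)) (cHB : c (edgeF H) ≠ c (edgeF B))
    (hHBr2 : H r = B r)
    (hFp : F p ≠ A p) (hFq : F q ≠ A q) (cFB : c (edgeF F) ≠ c (edgeF B)) : False := by
  obtain ⟨z₀, hz₀A, hz₀B⟩ := exists_ne_ne hN (A q) (B q)
  obtain ⟨w₀, hw₀A, hw₀B⟩ := exists_ne_ne hN (A r) (B r)
  obtain ⟨z₁, hz₁A, hz₁B⟩ := exists_ne_ne hN (A p) (B p)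
  have hX := CG1 hrb hN hpq hpr hqr hAB cAB hHp hHq cHA cHB hHBr2 hz₀A hz₀B hw₀A hw₀B
  set X : Fin 3 → Fin N := mk3 p q r (A p) z₀ w₀ with hXdef
  have xp : X p = A p := mk3_p _ _ _
  have xq : X q = z₀ := mk3_q hpq.symm _ _ _
  have xr : X r = w₀ := mk3_r hpr.symm hqr.symm _ _ _
  have hX' := CG1 hrb hN hpq.symm hqr hpr hAB cAB hHq hHp cHA cHB hHBr2 hz₁A hz₁B hw₀A hw₀B
  set X' : Fin 3 → Fin N := mk3 q p r (A q) z₁ w₀ with hX'def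
  have x'q : X' q = A q := mk3_p _ _ _
  have x'p : X' p = z₁ := mk3_q hpq _ _ _
  have x'r : X' r = w₀ := mk3_r hqr.symm hpr.symm _ _ _
  by_cases cFA : c (edgeF F) = c (edgeF A)
  · -- F has A's color
    by_cases hFrB : F r = B r
    · -- F r = B r = H r
      by_cases hFqB : F q = B q
      · by_cases hFpB : F p = B p
        · exact cFB (by rw [eq_of_coords hpq hpr hqr hFpB hFqB hFrB])
        · -- F q = B q only : path X – H – F
          have hXF : ∀ i, X i ≠ F i := disj_of_coords hpq hpr hqr
            (by rw [xp]; exact fun h => hFp h.symm) (by rw [xq, hFqB]; exact hz₀B)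
            (by rw [xr, hFrB]; exact hw₀B)
          have := master hrb hpr hpq hqr.symm hXF (by rw [hHp, xp] : H p = X p)
            (by rw [hHBr2, hFrB] : H r = F r) (by rw [hHq, xq]; exact fun h => hz₀A h.symm)
            (by rw [hHq, hFqB]; exact hAB q)
          rcases this with h | h | h <;> grind
      · by_cases hFpB : F p = B p
        · -- F p = B p only : path X' – H – F
          have hX'F : ∀ i, X' i ≠ F i := disj_of_coords hpq hpr hqr
            (by rw [x'p, hFpB]; exact hz₁B) (by rw [x'q]; exact fun h => hFq h.symm)
            (by rw [x'r, hFrB]; exact hw₀B)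
          have := master hrb hqr hpq.symm hpr.symm hX'F (by rw [hHq, x'q] : H q = X' q)
            (by rw [hHBr2, hFrB] : H r = F r) (by rw [hHp, x'p]; exact fun h => hz₁A h.symm)
            (by rw [hHp, hFpB]; exact hAB p)
          rcases this with h | h | h <;> grind
        · -- neither : the X1 trick
          set X1 : Fin 3 → Fin N := mk3 p q r (A p) (B q) (A r) with hX1def
          have x1p : X1 p = A p := mk3_p _ _ _
          have x1q : X1 q = B q := mk3_q hpq.symm _ _ _
          have x1r : X1 r = A r := mk3_r hpr.symm hqr.symm _ _ _
          have hX1F : ∀ i, X1 i ≠ F i := disj_of_coords hpq hpr hqr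
            (by rw [x1p]; exact fun h => hFp h.symm) (by rw [x1q]; exact fun h => hFqB h.symm)
            (by rw [x1r, hFrB]; exact hAB r)
          -- path X1 – H – F
          have c1 := master hrb hpr hpq hqr.symm hX1F (by rw [hHp, x1p] : H p = X1 p)
            (by rw [hHBr2, hFrB] : H r = F r) (by rw [hHq, x1q]; exact hAB q)
            (by rw [hHq]; exact fun h => hFq h.symm)
          rcases c1 with h | h | h
          · -- X1 has H's color: STAR (X1,F) on B
            have cX1F : c (edgeF X1) ≠ c (edgeF F) := by
              rw [h]; exact fun h' => cHA (h'.trans cFA)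
            have cBX1 : c (edgeF B) ≠ c (edgeF X1) := by rw [h]; exact cHB.symm
            rcases STAR hrb hN hX1F cX1F cBX1 cFB.symm with hn | hn
            · exact not_near2 hpq.symm hqr hpr (by rw [x1p]; exact (hAB p).symm)
                (by rw [x1r]; exact (hAB r).symm) hn
            · exact not_near2 hpr.symm hqr.symm hpq (fun h => hFpB h.symm)
                (fun h => hFqB h.symm) hn
          · -- X1 has F's (=A's) color: path X1 – H – X'
            have hX1X' : ∀ i, X1 i ≠ X' i := disj_of_coords hpq hpr hqr
              (by rw [x1p, x'p]; exact fun h' => hz₁A h'.symm)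
              (by rw [x1q, x'q]; exact (hAB q).symm)
              (by rw [x1r, x'r]; exact fun h' => hw₀A h'.symm)
            have := master hrb hpq hpr hqr hX1X' (by rw [hHp, x1p] : H p = X1 p)
              (by rw [hHq, x'q] : H q = X' q) (by rw [hHBr2, x1r]; exact (hAB r).symm)
              (by rw [hHBr2, x'r]; exact fun h' => hw₀B h'.symm)
            rcases this with h' | h' | h' <;> grind
          · exact cHA (h.trans cFA)
    · -- F r ≠ B r (so F, H disjoint)
      have hFH : disj F H := disj_of_coords hpq hpr hqr
        (by rw [hHp]; exact hFp) (by rw [hHq]; exact hFq) (by rw [hHBr2]; exact hFrB)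
      have cFH : c (edgeF F) ≠ c (edgeF H) := fun h => cHA (h.symm.trans cFA)
      rcases STAR hrb hN hFH cFH cFB.symm cHB.symm with hnear | hnear
      · -- B near F
        rcases near_elim hpq hpr hqr hnear with ⟨h1, h2⟩ | ⟨h1, h2⟩ | ⟨h1, h2⟩
        · -- B p = F p, B q = F q
          by_cases hFrA : F r = A r
          · -- STAR (F,H) on X
            have cXF : c (edgeF X) ≠ c (edgeF F) := by rw [hX]; exact cFB.symm
            have cXH : c (edgeF X) ≠ c (edgeF H) := by rw [hX]; exact cHB.symm
            rcases STAR hrb hN hFH cFH cXF cXH with hn | hn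
            · exact not_near2 hpq hpr hqr (by rw [xq, ← h2]; exact hz₀B)
                (by rw [xr, hFrA]; exact hw₀A) hn
            · exact not_near2 hpq hpr hqr (by rw [xq, hHq]; exact hz₀A)
                (by rw [xr, hHBr2]; exact hw₀B) hn
          · -- F r fresh : path F – M – H with M := (A p, z₀, F r)
            have hM := CG1 hrb hN hpq hpr hqr hAB cAB hHp hHq cHA cHB hHBr2 hz₀A hz₀B
              hFrA hFrB
            set M : Fin 3 → Fin N := mk3 p q r (A p) z₀ (F r) with hMdef
            have mp : M p = A p := mk3_p _ _ _
            have mq : M q = z₀ := mk3_q hpq.symm _ _ _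
            have mr : M r = F r := mk3_r hpr.symm hqr.symm _ _ _
            have := master hrb hpr.symm hqr.symm hpq (hFH : ∀ i, F i ≠ H i) mr
              (by rw [mp, hHp] : M p = H p) (by rw [mq, ← h2]; exact hz₀B)
              (by rw [mq, hHq]; exact hz₀A)
            rcases this with h | h | h <;> grind
        · -- B p = F p, B r = F r : impossible since F r ≠ B r
          exact hFrB h2.symm
        · -- B q = F q, B r = F r : impossible
          exact hFrB h2.symm
      · -- B near H : impossible
        exact not_near2 hpr.symm hqr.symm hpq (by rw [hHp]; exact (hAB p).symm)
          (by rw [hHq]; exact (hAB q).symm) hnear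
  · -- F's color differs from A's and B's
    rcases STAR hrb hN hAB cAB cFA cFB with hnear | hnear
    · exact not_near2 hpr.symm hqr.symm hpq hFp hFq hnear
    · rcases near_elim hpq hpr hqr hnear with ⟨h1, h2⟩ | ⟨h1, h2⟩ | ⟨h1, h2⟩
      · -- F p = B p, F q = B q
        have hFrB : F r ≠ B r := by
          intro h
          exact cFB (by rw [eq_of_coords hpq hpr hqr h1 h2 h])
        by_cases hFrA : F r = A r
        · -- path X – A – F
          have hXF : ∀ i, X i ≠ F i := disj_of_coords hpq hpr hqr
            (by rw [xp, h1]; exact hAB p) (by rw [xq, h2]; exact hz₀B)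
            (by rw [xr, hFrA]; exact hw₀A)
          have := master hrb hpr hpq hqr.symm hXF (xp.symm : A p = X p)
            (hFrA.symm : A r = F r) (by rw [xq]; exact fun h => hz₀A h.symm)
            (by rw [h2]; exact hAB q)
          rcases this with h | h | h <;> grind
        · -- F r fresh : path F – M – H gives F's color = H's, then STAR (F,A) on M
          have hM := CG1 hrb hN hpq hpr hqr hAB cAB hHp hHq cHA cHB hHBr2 hz₀A hz₀B
            hFrA hFrB
          set M : Fin 3 → Fin N := mk3 p q r (A p) z₀ (F r) with hMdef
          have mp : M p = A p := mk3_p _ _ _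
          have mq : M q = z₀ := mk3_q hpq.symm _ _ _
          have mr : M r = F r := mk3_r hpr.symm hqr.symm _ _ _
          have hFH : disj F H := disj_of_coords hpq hpr hqr
            (by rw [hHp]; exact hFp) (by rw [hHq]; exact hFq)
            (by rw [hHBr2]; exact hFrB)
          have c1 := master hrb hpr.symm hqr.symm hpq (hFH : ∀ i, F i ≠ H i) mr
            (by rw [mp, hHp] : M p = H p) (by rw [mq, h2]; exact hz₀B)
            (by rw [mq, hHq]; exact hz₀A)
          have hFHcol : c (edgeF F) = c (edgeF H) := by
            rcases c1 with h | h | h <;> grind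
          have hFA : disj F A := disj_of_coords hpq hpr hqr hFp hFq hFrA
          have cMF : c (edgeF M) ≠ c (edgeF F) := by rw [hM]; exact cFB.symm
          have cMA : c (edgeF M) ≠ c (edgeF A) := by rw [hM]; exact cAB.symm
          rcases STAR hrb hN hFA (fun h => cFA h) cMF cMA with hn | hn
          · exact not_near2 hpr.symm hqr.symm hpq (by rw [mp]; exact fun h => hFp h.symm)
              (by rw [mq, h2]; exact hz₀B) hn
          · exact not_near2 hpq hpr hqr (by rw [mq]; exact hz₀A)
              (by rw [mr]; exact hFrA) hn
      · -- F p = B p, F r = B r : shape with p,q swapped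
        exact B2qr hrb hN hpq.symm hqr hpr hAB cAB hHq hHp cHA cHB hHBr2 hFq h1 h2 cFB
      · -- F q = B q, F r = B r
        exact B2qr hrb hN hpq hpr hqr hAB cAB hHp hHq cHA cHB hHBr2 hFp h1 h2 cFB

end Branch2Main

section CoverFinal
set_option maxHeartbeats 1000000

variable {N : ℕ} {c : Finset (Fin 3 × Fin N) → ℕ}

/-- The cover lemma: a rainbow-free coloring with at least 3 colors has two vertices in
distinct parts such that all edges avoiding them have a common color. -/
lemma cover (hrb : ¬HasRainbowLooseTri c) (hN : 3 ≤ N)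
    (h3c : ¬∃ k₀ k₁ : ℕ, ∀ E : Fin 3 → Fin N, c (edgeF E) = k₀ ∨ c (edgeF E) = k₁) :
    ∃ (b : ℕ) (i j : Fin 3) (u v : Fin N), i ≠ j ∧
      ∀ E : Fin 3 → Fin N, E i ≠ u → E j ≠ v → c (edgeF E) = b := by
  have hE0 : ∃ E1 E2 : Fin 3 → Fin N, c (edgeF E1) ≠ c (edgeF E2) := by
    by_contra h
    push_neg at h
    exact h3c ⟨c (edgeF (fun _ => ⟨0, by omega⟩)), c (edgeF (fun _ => ⟨0, by omega⟩)),
      fun E => Or.inl (h E _)⟩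
  obtain ⟨E1, E2, hE12⟩ := hE0
  have hdis : ∃ A B : Fin 3 → Fin N, disj A B ∧ c (edgeF A) ≠ c (edgeF B) := by
    have hch := fun i => exists_ne_ne hN (E1 i) (E2 i)
    choose G hG1 hG2 using hch
    by_cases h : c (edgeF G) = c (edgeF E1)
    · exact ⟨G, E2, fun i => hG2 i, h ▸ hE12⟩
    · exact ⟨G, E1, fun i => hG1 i, h⟩
  obtain ⟨A, B, hAB, cAB⟩ := hdis
  obtain ⟨H₀, hH₀A, hH₀B⟩ :
      ∃ H₀, c (edgeF H₀) ≠ c (edgeF A) ∧ c (edgeF H₀) ≠ c (edgeF B) := by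
    by_contra h
    push_neg at h
    refine h3c ⟨c (edgeF A), c (edgeF B), fun E => ?_⟩
    by_cases hA : c (edgeF E) = c (edgeF A)
    · exact Or.inl hA
    · exact Or.inr (h E hA)
  rcases STAR hrb hN hAB cAB hH₀A hH₀B with hnear | hnear
  · obtain ⟨i, j, hij, hHi, hHj⟩ := hnear
    obtain ⟨k, hik, hjk⟩ := third_part hij
    have hHk : H₀ k ≠ A k := by
      intro h
      exact hH₀A (by rw [eq_of_coords hij hik hjk hHi hHj h])
    refine ⟨c (edgeF B), i, j, A i, A j, hij, fun E hEi hEj => ?_⟩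
    by_contra hEb
    by_cases hbr : H₀ k = B k
    · exact B2 hrb hN hij hik hjk hAB cAB hHi hHj hH₀A hH₀B hbr hEi hEj hEb
    · exact B1 hrb hN hij hik hjk hAB cAB hHi hHj hHk hH₀A hH₀B hbr hEi hEj hEb
  · obtain ⟨i, j, hij, hHi, hHj⟩ := hnear
    obtain ⟨k, hik, hjk⟩ := third_part hij
    have hHk : H₀ k ≠ B k := by
      intro h
      exact hH₀B (by rw [eq_of_coords hij hik hjk hHi hHj h])
    refine ⟨c (edgeF A), i, j, B i, B j, hij, fun E hEi hEj => ?_⟩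
    by_contra hEa
    by_cases hbr : H₀ k = A k
    · exact B2 hrb hN hij hik hjk hAB.symm cAB.symm hHi hHj hH₀B hH₀A hbr hEi hEj hEa
    · exact B1 hrb hN hij hik hjk hAB.symm cAB.symm hHi hHj hHk hH₀B hH₀A hbr hEi hEj hEa

end CoverFinal

section MainLemma
set_option maxHeartbeats 1000000

/-- an injection `Fin m → Fin N` avoiding `w`. -/
def skipv {N m : ℕ} (h : m < N) (w : Fin N) (x : Fin m) : Fin N :=
  if (x : ℕ) < (w : ℕ) then ⟨x, lt_trans x.2 h⟩ else ⟨x + 1, by omega⟩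

lemma skipv_ne {N m : ℕ} (h : m < N) (w : Fin N) (x : Fin m) : skipv h w x ≠ w := by
  intro he
  have := congrArg Fin.val he
  unfold skipv at this
  split_ifs at this <;> simp_all <;> omega

lemma skipv_inj {N m : ℕ} (h : m < N) (w : Fin N) : Function.Injective (skipv h w) := by
  intro a b hab
  have h2 := congrArg Fin.val hab
  unfold skipv at h2
  split_ifs at h2 <;> simp_all <;> (apply Fin.val_injective; omega)

lemma image_edgeF {m N : ℕ} (E : Fin 3 → Fin m) (g : Fin 3 → Fin m → Fin N) :
    (edgeF E).image (fun v => (v.1, g v.1 v.2)) = edgeF (fun i => g i (E i)) := by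
  rw [edgeF, Finset.image_image]
  rfl

lemma mainN {N : ℕ} (H : TriGraph) (hmN : H.m < N) (hN : 3 ≤ N)
    (hSR : ∀ c₂ : Finset (Fin 3 × Fin N) → Fin 2, H.HasMonoCopy c₂)
    (c : Finset (Fin 3 × Fin N) → ℕ) : H.HasMonoCopy c ∨ HasRainbowLooseTri c := by
  by_cases hrb : HasRainbowLooseTri c
  · exact Or.inr hrb
  left
  by_cases h2 : ∃ k₀ k₁ : ℕ, ∀ E : Fin 3 → Fin N, c (edgeF E) = k₀ ∨ c (edgeF E) = k₁
  · -- at most two colors: reduce to the 2-colored Ramsey hypothesis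
    obtain ⟨k₀, k₁, hk⟩ := h2
    obtain ⟨f, hinj, htri, a, ha⟩ := hSR (fun S => if c S = k₀ then 0 else 1)
    refine ⟨f, hinj, htri, ?_⟩
    by_cases haz : a = 0
    · refine ⟨k₀, fun e he => ?_⟩
      have h := ha e he
      rw [haz] at h
      by_contra hne
      simp only [if_neg hne] at h
      exact one_ne_zero h
    · have ha1 : a = 1 := by fin_cases a <;> simp_all
      refine ⟨k₁, fun e he => ?_⟩
      have h := ha e he
      rw [ha1] at h
      have hne : c (e.image f) ≠ k₀ := by
        intro hck
        simp only [if_pos hck] at h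
        exact one_ne_zero h.symm
      obtain ⟨E, hE⟩ := triEdge_repr (htri e he)
      rw [hE] at hne ⊢
      rcases hk E with h' | h'
      · exact absurd h' hne
      · exact h'
  · -- at least three colors: use the cover lemma and embed a monochromatic copy
    obtain ⟨b, i, j, u, v, hij, hcov⟩ := cover hrb hN h2
    refine ⟨fun vtx => (vtx.1, skipv hmN (if vtx.1 = i then u else if vtx.1 = j then v else u)
      vtx.2), ?_, ?_, ?_⟩
    · rintro ⟨l, x⟩ ⟨l', x'⟩ hll
      have h1 : l = l' := congrArg Prod.fst hll
      subst h1
      have h2 : skipv hmN _ x = skipv hmN _ x' := congrArg Prod.snd hll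
      exact Prod.ext rfl (skipv_inj hmN _ h2)
    · intro e he
      obtain ⟨E, hE⟩ := triEdge_repr (H.isTri e he)
      rw [hE, image_edgeF E (fun l => skipv hmN (if l = i then u else if l = j then v else u))]
      exact edgeF_isTriEdge _
    · refine ⟨b, fun e he => ?_⟩
      obtain ⟨E, hE⟩ := triEdge_repr (H.isTri e he)
      rw [hE, image_edgeF E (fun l => skipv hmN (if l = i then u else if l = j then v else u))]
      refine hcov _ ?_ ?_
      · simp only [if_pos rfl]
        exact skipv_ne hmN u (E i)
      · rw [if_neg (Ne.symm hij), if_pos rfl]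
        exact skipv_ne hmN v (E j)

end MainLemma

section Assembly
set_option maxHeartbeats 1000000

lemma copy_ge {H : TriGraph} {t : ℕ} (h : H.HasCopy t) : H.m ≤ t := by
  obtain ⟨f, hinj, -⟩ := h
  have h2 := Fintype.card_le_of_injective f hinj
  simp only [Fintype.card_prod, Fintype.card_fin] at h2
  omega

lemma small_mem (H : TriGraph) (hm : H.m ≤ 1)
    (c₂ : Finset (Fin 3 × Fin H.m) → Fin 2) : H.HasMonoCopy c₂ := by
  have huniq : ∀ e ∈ H.edges, ∀ e' ∈ H.edges, e = e' := by
    intro e he e' he'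
    obtain ⟨E, rfl⟩ := triEdge_repr (H.isTri e he)
    obtain ⟨E', rfl⟩ := triEdge_repr (H.isTri e' he')
    have hEE : E = E' := by
      funext i
      have h1 := (E i).2
      have h2 := (E' i).2
      apply Fin.ext
      omega
    rw [hEE]
  refine ⟨id, Function.injective_id,
    fun e he => by rw [Finset.image_id]; exact H.isTri e he, ?_⟩
  rcases Finset.eq_empty_or_nonempty H.edges with he | ⟨e₀, he₀⟩
  · exact ⟨0, by simp [he]⟩
  · exact ⟨c₂ (e₀.image id), fun e he => by rw [huniq e he e₀ he₀]⟩

lemma SF_sub (H : TriGraph) {N : ℕ}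
    (h : ∀ c : Finset (Fin 3 × Fin N) → ℕ, H.HasMonoCopy c ∨ HasRainbowLooseTri c)
    (c₂ : Finset (Fin 3 × Fin N) → Fin 2) : H.HasMonoCopy c₂ := by
  rcases h (fun S => ((c₂ S : Fin 2) : ℕ)) with hm | hrb
  · obtain ⟨f, hinj, htri, a, ha⟩ := hm
    refine ⟨f, hinj, htri, ?_⟩
    rcases Finset.eq_empty_or_nonempty H.edges with he | ⟨e₀, he₀⟩
    · exact ⟨0, by simp [he]⟩
    · refine ⟨c₂ (e₀.image f), fun e he => ?_⟩
      have h1 := ha e he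
      have h2 := ha e₀ he₀
      exact Fin.val_injective (h1.trans h2.symm)
  · exfalso
    obtain ⟨v, hv, t1, t2, t3, n1, n2, n3⟩ := hrb
    simp only at n1 n2 n3
    have b1 := (c₂ {v 0, v 1, v 2}).2
    have b2 := (c₂ {v 2, v 3, v 4}).2
    have b3 := (c₂ {v 4, v 5, v 6}).2
    omega

theorem constrained_ramsey_loose_tripartite_aux (H : TriGraph)
    (hR : tOf H + 1 ≤ ramseyTwoTri H) :
    constrainedRamseyLooseTri H = ramseyTwoTri H := by
  have hcopy : H.HasCopy H.m :=
    ⟨id, Function.injective_id, fun e he => by rw [Finset.image_id]; exact H.isTri e he⟩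
  have htOf : tOf H ≤ H.m := Nat.sInf_le hcopy
  have htOf' : H.m ≤ tOf H := le_csInf ⟨H.m, hcopy⟩ fun t ht => copy_ge ht
  have hSRne : {N : ℕ | ∀ c₂ : Finset (Fin 3 × Fin N) → Fin 2, H.HasMonoCopy c₂}.Nonempty := by
    by_contra h
    rw [Set.not_nonempty_iff_eq_empty] at h
    have : ramseyTwoTri H = 0 := by
      rw [ramseyTwoTri, h, Nat.sInf_empty]
    omega
  have hRmem : ramseyTwoTri H ∈
      {N : ℕ | ∀ c₂ : Finset (Fin 3 × Fin N) → Fin 2, H.HasMonoCopy c₂} :=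
    Nat.sInf_mem hSRne
  have hm2 : 2 ≤ H.m := by
    by_contra h
    push_neg at h
    have hmem : H.m ∈ {N : ℕ | ∀ c₂ : Finset (Fin 3 × Fin N) → Fin 2, H.HasMonoCopy c₂} :=
      fun c₂ => small_mem H (by omega) c₂
    have := Nat.sInf_le hmem
    rw [ramseyTwoTri] at hR
    omega
  have hmR : H.m < ramseyTwoTri H := by omega
  have hR3 : 3 ≤ ramseyTwoTri H := by omega
  have hRSf : ramseyTwoTri H ∈
      {N : ℕ | ∀ c : Finset (Fin 3 × Fin N) → ℕ, H.HasMonoCopy c ∨ HasRainbowLooseTri c} :=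
    fun c => mainN H hmR hR3 hRmem c
  apply le_antisymm
  · exact Nat.sInf_le hRSf
  · have hSFne : {N : ℕ | ∀ c : Finset (Fin 3 × Fin N) → ℕ,
        H.HasMonoCopy c ∨ HasRainbowLooseTri c}.Nonempty := ⟨ramseyTwoTri H, hRSf⟩
    have hmem := Nat.sInf_mem hSFne
    exact Nat.sInf_le (fun c₂ => SF_sub H hmem c₂)

end Assembly


/-- For every 3-partite 3-graph `H` with `R'₂(H) ≥ t(H) + 1`, `f'(H, ℒ) = R'₂(H)`. -/
theorem constrained_ramsey_loose_tripartite (H : TriGraph)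
    (hR : tOf H + 1 ≤ ramseyTwoTri H) :
    constrainedRamseyLooseTri H = ramseyTwoTri H := by
  exact constrained_ramsey_loose_tripartite_aux H hR
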